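/- Proposition 1, third case. Let M ≥ 1, N ≥ 2 and let μ, ν be integers with M+1 ≤ μ < ν ≤ M+N. Write Q = Π_{j=μ}^{ν−2} (w_j − q w_{j+1}')(q w_j' − w_{j+1}). Then, with respect to the pairs (w_μ, w_μ'), …, (w_{ν−1}, w_{ν−1}'), all carrying the fermionic exchange factor H^f, and with w_{μ−1}, w_ν further free variables, the weak equality (w_μ − q w_{μ−1}) · Q · (w_ν − q w_{ν−1}') ∼ (q w_μ' − w_{μ−1}) · Q · (q w_ν − w_{ν−1}) holds. -/

import Mathlib

/-- Bosonic exchange factor `H^b(u,v) = -(q²v - u)/(q²u - v)`. -/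
noncomputable def Hb (q u v : ℂ) : ℂ := -(q ^ 2 * v - u) / (q ^ 2 * u - v)

/-- Fermionic exchange factor `H^f(u,v) = -(q²u - v)/(q²v - u)`. -/
noncomputable def Hf (q u v : ℂ) : ℂ := -(q ^ 2 * u - v) / (q ^ 2 * v - u)

/-- Exchange factor assignment for `U_q(sl^(M|N))`: bosonic for `j < M`,
the constant `-1` for `j = M`, fermionic for `j > M`. -/
noncomputable def Hex (M : ℕ) (q : ℂ) (j : ℕ) : ℂ → ℂ → ℂ :=
  if j < M then Hb q else if j = M then fun _ _ => -1 else Hf q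

/-- Interchange `w_j` and `w_j'` for every `j ∈ σ`. -/
def swapOn (σ : Finset ℕ) (w w' : ℕ → ℂ) : ℕ → ℂ := fun j => if j ∈ σ then w' j else w j

/-- Weak equality `F ∼ G` with respect to the pairs `(w_j, w_j')`, `j ∈ J`,
carrying exchange factors `H j`. -/
def WeakEq (J : Finset ℕ) (H : ℕ → ℂ → ℂ → ℂ) (w w' : ℕ → ℂ)
    (F G : (ℕ → ℂ) → (ℕ → ℂ) → ℂ) : Prop :=
  ∑ σ ∈ J.powerset, (∏ j ∈ σ, H j (w' j) (w j)) * F (swapOn σ w w') (swapOn σ w' w)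
    = ∑ σ ∈ J.powerset, (∏ j ∈ σ, H j (w' j) (w j)) * G (swapOn σ w w') (swapOn σ w' w)

/-- `Q = Π_{j=μ}^{ν−2} (w_j − q w_{j+1}')(q w_j' − w_{j+1})`. -/
noncomputable def Qfer (q : ℂ) (μ ν : ℕ) (u u' : ℕ → ℂ) : ℂ :=
  ∏ j ∈ Finset.Ico μ (ν - 1), (u j - q * u' (j + 1)) * (q * u' j - u (j + 1))

/-- The inductive "state" attached to the chain `[μ, m]`, with coefficient
functions `A B C` evaluated (symmetrically) on the last pair. -/
noncomputable def stx (q : ℂ) (μ m : ℕ) (A B C : ℂ → ℂ → ℂ) (u u' : ℕ → ℂ) : ℂ :=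
  B (u m) (u' m) * (u μ - q ^ 2 * u' μ) - A (u m) (u' m) * (u m - q ^ 2 * u' m)
    - C (u m) (u' m) * (u μ * u' m - u' μ * u m)

/-- Key one-link transport identity. -/
private lemma key_step (q s1 s2 x y z v α β γ : ℂ) (hz : q ^ 2 * z - v ≠ 0) :
    (x - q * v) * (q * y - z) * (β * (s1 - q ^ 2 * s2) - α * (z - q ^ 2 * v)
        - γ * (s1 * v - s2 * z))
      + Hf q v z * ((x - q * z) * (q * y - v) * (β * (s1 - q ^ 2 * s2)
        - α * (v - q ^ 2 * z) - γ * (s1 * z - s2 * v)))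
    = (z - v) / (q ^ 2 * z - v) *
        ((β * (q * (1 + q ^ 2) * (x * y + z * v) - q ^ 2 * (x + y) * (z + v))
            + γ * ((1 + q ^ 2) * (z * v) * (x + y) - q * (z * v + x * y) * (z + v)))
            * (s1 - q ^ 2 * s2)
          - α * ((z - q ^ 2 * v) * (v - q ^ 2 * z)) * (x - q ^ 2 * y)
          - γ * ((z - q ^ 2 * v) * (v - q ^ 2 * z)) * (s1 * y - s2 * x)) := by
  unfold Hf
  field_simp
  ring

/-- Base toggle identity. -/
private lemma key_base (q z v a' b' c' : ℂ) (hz : q ^ 2 * z - v ≠ 0) :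
    (b' * (z - q ^ 2 * v) - a' * (z - q ^ 2 * v) - c' * (z * v - v * z))
      + Hf q v z * (b' * (v - q ^ 2 * z) - a' * (v - q ^ 2 * z) - c' * (v * z - z * v)) = 0 := by
  unfold Hf
  rw [div_mul_eq_mul_div, add_div' _ _ _ hz, div_eq_zero_iff]
  exact Or.inl (by ring)

private lemma aux_main (q : ℂ) (w w' : ℕ → ℂ) (μ : ℕ) :
    ∀ m, μ ≤ m → (∀ j, μ ≤ j → j ≤ m → q ^ 2 * w j ≠ w' j) →
    ∀ A B C : ℂ → ℂ → ℂ, (∀ x y, A x y = A y x) → (∀ x y, B x y = B y x) →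
      (∀ x y, C x y = C y x) →
    ∑ σ ∈ (Finset.Ico μ (m + 1)).powerset,
      (∏ j ∈ σ, Hf q (w' j) (w j)) *
        (stx q μ m A B C (swapOn σ w w') (swapOn σ w' w) *
          Qfer q μ (m + 1) (swapOn σ w w') (swapOn σ w' w)) = 0 := by
  intro m hm
  induction m, hm using Nat.le_induction with
  | base =>
    intro hden A B C hA hB hC
    have hz : q ^ 2 * w μ - w' μ ≠ 0 := sub_ne_zero_of_ne (hden μ le_rfl le_rfl)
    rw [Nat.Ico_succ_singleton, show ({μ} : Finset ℕ) = insert μ ∅ by rfl,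
      Finset.sum_powerset_insert (by simp), Finset.powerset_empty,
      Finset.sum_singleton, Finset.sum_singleton]
    have h0 : swapOn ∅ w w' = w := by funext j; simp [swapOn]
    have h0' : swapOn ∅ w' w = w' := by funext j; simp [swapOn]
    have h1 : swapOn (insert μ ∅) w w' μ = w' μ := by simp [swapOn]
    have h1' : swapOn (insert μ ∅) w' w μ = w μ := by simp [swapOn]
    have hq1 : Qfer q μ (μ + 1) (swapOn ∅ w w') (swapOn ∅ w' w) = 1 := by
      unfold Qfer; simp
    have hq2 : Qfer q μ (μ + 1) (swapOn (insert μ ∅) w w')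
        (swapOn (insert μ ∅) w' w) = 1 := by
      unfold Qfer; simp
    rw [hq1, hq2]
    unfold stx
    rw [h0, h0', h1, h1', Finset.prod_empty, Finset.prod_insert (by simp),
      Finset.prod_empty, hA (w' μ) (w μ), hB (w' μ) (w μ), hC (w' μ) (w μ)]
    have := key_base q (w μ) (w' μ) (A (w μ) (w' μ)) (B (w μ) (w' μ)) (C (w μ) (w' μ)) hz
    linear_combination this
  | succ m hm ih =>
    intro hden A B C hA hB hC
    have hz : q ^ 2 * w (m + 1) - w' (m + 1) ≠ 0 :=
      sub_ne_zero_of_ne (hden (m + 1) (by omega) le_rfl)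
    have hnotmem : m + 1 ∉ Finset.Ico μ (m + 1) := by simp
    rw [Nat.Ico_succ_right_eq_insert_Ico (by omega), Finset.sum_powerset_insert hnotmem,
      ← Finset.sum_add_distrib]
    -- new coefficient functions
    set z := w (m + 1) with hzdef
    set v := w' (m + 1) with hvdef
    have key : ∀ τ ∈ (Finset.Ico μ (m + 1)).powerset,
        ((∏ j ∈ τ, Hf q (w' j) (w j)) *
            (stx q μ (m + 1) A B C (swapOn τ w w') (swapOn τ w' w) *
              Qfer q μ (m + 1 + 1) (swapOn τ w w') (swapOn τ w' w))
          + (∏ j ∈ insert (m + 1) τ, Hf q (w' j) (w j)) *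
            (stx q μ (m + 1) A B C (swapOn (insert (m + 1) τ) w w')
                (swapOn (insert (m + 1) τ) w' w) *
              Qfer q μ (m + 1 + 1) (swapOn (insert (m + 1) τ) w w')
                (swapOn (insert (m + 1) τ) w' w)))
        = (z - v) / (q ^ 2 * z - v) *
            ((∏ j ∈ τ, Hf q (w' j) (w j)) *
              (stx q μ m
                  (fun _ _ => A z v * ((z - q ^ 2 * v) * (v - q ^ 2 * z)))
                  (fun x y => B z v * (q * (1 + q ^ 2) * (x * y + z * v)
                      - q ^ 2 * (x + y) * (z + v))
                    + C z v * ((1 + q ^ 2) * (z * v) * (x + y)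
                      - q * (z * v + x * y) * (z + v)))
                  (fun _ _ => C z v * ((z - q ^ 2 * v) * (v - q ^ 2 * z)))
                  (swapOn τ w w') (swapOn τ w' w) *
                Qfer q μ (m + 1) (swapOn τ w w') (swapOn τ w' w))) := by
      intro τ hτ
      have hτs : τ ⊆ Finset.Ico μ (m + 1) := Finset.mem_powerset.mp hτ
      have hne : m + 1 ∉ τ := fun hc => by
        have := Finset.mem_Ico.mp (hτs hc); omega
      have e1 : ∀ j, j ≠ m + 1 → swapOn (insert (m + 1) τ) w w' j = swapOn τ w w' j := by
        intro j hj; simp [swapOn, Finset.mem_insert, hj]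
      have e1' : ∀ j, j ≠ m + 1 → swapOn (insert (m + 1) τ) w' w j = swapOn τ w' w j := by
        intro j hj; simp [swapOn, Finset.mem_insert, hj]
      have e2 : swapOn (insert (m + 1) τ) w w' (m + 1) = v := by simp [swapOn, hvdef]
      have e2' : swapOn (insert (m + 1) τ) w' w (m + 1) = z := by simp [swapOn, hzdef]
      have e3 : swapOn τ w w' (m + 1) = z := by simp [swapOn, hne, hzdef]
      have e3' : swapOn τ w' w (m + 1) = v := by simp [swapOn, hne, hvdef]
      have hQsplit : ∀ u u' : ℕ → ℂ,
          Qfer q μ (m + 1 + 1) u u'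
            = Qfer q μ (m + 1) u u' * ((u m - q * u' (m + 1)) * (q * u' m - u (m + 1))) := by
        intro u u'
        unfold Qfer
        have : m + 1 + 1 - 1 = m + 1 := rfl
        rw [this, Finset.prod_Ico_succ_top hm]
        rfl
      have hQcongr : Qfer q μ (m + 1) (swapOn (insert (m + 1) τ) w w')
            (swapOn (insert (m + 1) τ) w' w)
          = Qfer q μ (m + 1) (swapOn τ w w') (swapOn τ w' w) := by
        unfold Qfer
        refine Finset.prod_congr rfl ?_
        intro j hj
        have hjm : j < m := by
          have := Finset.mem_Ico.mp hj
          omega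
        rw [e1 j (by omega), e1' j (by omega), e1 (j + 1) (by omega), e1' (j + 1) (by omega)]
      rw [hQsplit (swapOn τ w w') (swapOn τ w' w),
        hQsplit (swapOn (insert (m + 1) τ) w w') (swapOn (insert (m + 1) τ) w' w),
        hQcongr, Finset.prod_insert hne]
      unfold stx
      rw [e1 μ (by omega), e1' μ (by omega), e1 m (by omega), e1' m (by omega),
        e2, e2', e3, e3', hA v z, hB v z, hC v z]
      have hk := key_step q (swapOn τ w w' μ) (swapOn τ w' w μ) (swapOn τ w w' m)
        (swapOn τ w' w m) z v (A z v) (B z v) (C z v) hz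
      linear_combination ((∏ j ∈ τ, Hf q (w' j) (w j)) *
        Qfer q μ (m + 1) (swapOn τ w w') (swapOn τ w' w)) * hk
    rw [Finset.sum_congr rfl key, ← Finset.mul_sum,
      ih (fun j h1 h2 => hden j h1 (by omega))
        (fun _ _ => A z v * ((z - q ^ 2 * v) * (v - q ^ 2 * z)))
        (fun x y => B z v * (q * (1 + q ^ 2) * (x * y + z * v)
            - q ^ 2 * (x + y) * (z + v))
          + C z v * ((1 + q ^ 2) * (z * v) * (x + y)
            - q * (z * v + x * y) * (z + v)))
        (fun _ _ => C z v * ((z - q ^ 2 * v) * (v - q ^ 2 * z)))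
        (fun x y => rfl) (fun x y => by ring) (fun x y => rfl), mul_zero]

theorem proposition1_third (M N : ℕ) (hM : 1 ≤ M) (hN : 2 ≤ N)
    (μ ν : ℕ) (hμ1 : M + 1 ≤ μ) (hμν : μ < ν) (hν : ν ≤ M + N)
    (q : ℂ) (hq : q ≠ 0) (hq2 : q ^ 2 ≠ 1) (w w' : ℕ → ℂ)
    (hden : ∀ j ∈ Finset.Ico μ ν, q ^ 2 * w j ≠ w' j) :
    WeakEq (Finset.Ico μ ν) (fun _ => Hf q) w w'
      (fun u u' => (u μ - q * u (μ - 1)) * Qfer q μ ν u u' * (u ν - q * u' (ν - 1)))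
      (fun u u' => (q * u' μ - u (μ - 1)) * Qfer q μ ν u u' * (q * u ν - u (ν - 1))) := by
  unfold WeakEq
  rw [← sub_eq_zero, ← Finset.sum_sub_distrib]
  have hν1 : ν - 1 + 1 = ν := by omega
  have hmain := aux_main q w w' μ (ν - 1) (by omega)
    (fun j h1 h2 => hden j (Finset.mem_Ico.mpr ⟨h1, by omega⟩))
    (fun _ _ => w (μ - 1)) (fun _ _ => w ν) (fun _ _ => q)
    (fun x y => rfl) (fun x y => rfl) (fun x y => rfl)
  rw [hν1] at hmain
  rw [← hmain]
  refine Finset.sum_congr rfl ?_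
  intro σ hσ
  dsimp only
  have hσs : σ ⊆ Finset.Ico μ ν := Finset.mem_powerset.mp hσ
  have hμσ : μ - 1 ∉ σ := fun hc => by
    have := Finset.mem_Ico.mp (hσs hc); omega
  have hνσ : ν ∉ σ := fun hc => by
    have := Finset.mem_Ico.mp (hσs hc); omega
  have ea : swapOn σ w w' (μ - 1) = w (μ - 1) := by simp [swapOn, hμσ]
  have eb : swapOn σ w w' ν = w ν := by simp [swapOn, hνσ]
  unfold stx
  dsimp only
  rw [ea, eb]
  ring
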